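/- arXiv:2307.02619 — 2 statements merged into one kernel-verified Lean document; each statement's English description precedes it below -/
import Mathlib

section
/- For every integer k ≥ 1, all the transformations below are defined (at each stage the (q−1,p−1) entry of the argument of T^{−1} is nonzero) and the matrix continued fraction identity F(z) = (τ_{α,0} ∘ τ_{α,1} ∘ ⋯ ∘ τ_{α,k−1})(F_k(z)) holds, where F(z) is the q×p matrix with entries φ_{i,j}(z) (0 ≤ i ≤ q−1, 0 ≤ j ≤ p−1) and F_k(z) is the q×p matrix with entries φ^{(k)}_{i,j}(z) (0 ≤ i ≤ q−1, 0 ≤ j ≤ p−1). -/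
open scoped BigOperators
open Finset

noncomputable section

/-- The field `ℂ((z⁻¹))`, realized as Laurent series in the variable `t = z⁻¹`. -/
abbrev LS : Type := LaurentSeries ℂ

/-- The element `z` of `ℂ((z⁻¹))` (i.e. `t⁻¹`). -/
def zLS : LS := HahnSeries.single (-1 : ℤ) (1 : ℂ)

/-- Constant (scalar) Laurent series. -/
def CLS (c : ℂ) : LS := HahnSeries.C c

/-- The generating series `Σ_{n ≥ 0} c n · z^{-n-1}` in `ℂ((z⁻¹))`. -/
def gen (c : ℕ → ℂ) : LS :=
  HahnSeries.single (1 : ℤ) (1 : ℂ) * (HahnSeries.ofPowerSeries ℤ ℂ) (PowerSeries.mk c)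

/-- Weight of a step of displacement `s` starting at height `h`:
`a_h^{(s)}` if `s ≥ 0`, and `a_{h+s}^{(s)}` if `s < 0`.  (Here `a k n = aₙ⁽ᵏ⁾`.) -/
def stepW (a : ℤ → ℤ → ℂ) (h s : ℤ) : ℂ := if 0 ≤ s then a s h else a s (h + s)

/-- Extend a finite step sequence by zero. -/
def ext {n : ℕ} (s : Fin n → ℤ) : ℕ → ℤ := fun t => if h : t < n then s ⟨t, h⟩ else 0

/-- Height after `k` steps, starting at height `i`. -/
def hgt (i : ℤ) (σ : ℕ → ℤ) (k : ℕ) : ℤ := i + ∑ t ∈ Finset.range k, σ t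

/-- Weight of the lattice path of length `n` starting at height `i` with steps `σ`. -/
def wgt (a : ℤ → ℤ → ℂ) (n : ℕ) (i : ℤ) (σ : ℕ → ℤ) : ℂ :=
  ∏ k ∈ Finset.range n, stepW a (hgt i σ k) (σ k)

/-- All admissible step sequences of length `n` (each step in `[-p, q]`). -/
def steps (p q n : ℕ) : Finset (Fin n → ℤ) :=
  Fintype.piFinset fun _ => Finset.Icc (-(p : ℤ)) (q : ℤ)

/-- `A_{[n,i,j]}`: weight polynomial of paths of length `n` from `(0,i)` to `(n,j)`
staying at height `≥ 0`. -/
def Apoly (p q : ℕ) (a : ℤ → ℤ → ℂ) (n : ℕ) (i j : ℤ) : ℂ :=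
  ∑ s ∈ steps p q n,
    if hgt i (ext s) n = j ∧ ∀ k ≤ n, 0 ≤ hgt i (ext s) k then wgt a n i (ext s) else 0

/-- `W_{[n,i,j]}`: weight polynomial of unrestricted paths of length `n` from `(0,i)` to `(n,j)`. -/
def Wpoly (p q : ℕ) (a : ℤ → ℤ → ℂ) (n : ℕ) (i j : ℤ) : ℂ :=
  ∑ s ∈ steps p q n, if hgt i (ext s) n = j then wgt a n i (ext s) else 0

/-- `V_{[n,i,j]}`: weight polynomial of paths of length `n` from `(0,i)` to `(n,j)`
staying at height `≤ -1`. -/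
def Vpoly (p q : ℕ) (a : ℤ → ℤ → ℂ) (n : ℕ) (i j : ℤ) : ℂ :=
  ∑ s ∈ steps p q n,
    if hgt i (ext s) n = j ∧ ∀ k ≤ n, hgt i (ext s) k ≤ -1 then wgt a n i (ext s) else 0

/-- `A_{[ℓ,i,j,N]}`: weight polynomial of paths of length `ℓ` from `(0,i)` to `(ℓ,j)`
with all heights in `{0, …, N-1}`. -/
def Aboxpoly (p q : ℕ) (a : ℤ → ℤ → ℂ) (N ℓ : ℕ) (i j : ℤ) : ℂ :=
  ∑ s ∈ steps p q ℓ,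
    if hgt i (ext s) ℓ = j ∧ ∀ k ≤ ℓ, 0 ≤ hgt i (ext s) k ∧ hgt i (ext s) k ≤ (N : ℤ) - 1
    then wgt a ℓ i (ext s) else 0

/-- The generating series `A_{i,j}(z)`. -/
def Aser (p q : ℕ) (a : ℤ → ℤ → ℂ) (i j : ℤ) : LS := gen fun n => Apoly p q a n i j

/-- The generating series `W_{i,j}(z)`. -/
def Wser (p q : ℕ) (a : ℤ → ℤ → ℂ) (i j : ℤ) : LS := gen fun n => Wpoly p q a n i j

/-- The generating series `V_{i,j}(z)`. -/
def Vser (p q : ℕ) (a : ℤ → ℤ → ℂ) (i j : ℤ) : LS := gen fun n => Vpoly p q a n i j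


/-- The one-sided banded matrix `H`: `h_{i,j} = a_{min(i,j)}^{(j-i)}` when `-p ≤ j-i ≤ q`. -/
def Hmat (p q : ℕ) (a : ℤ → ℤ → ℂ) (i j : ℕ) : ℂ :=
  if -(p : ℤ) ≤ (j : ℤ) - (i : ℤ) ∧ (j : ℤ) - (i : ℤ) ≤ (q : ℤ) then
    a ((j : ℤ) - (i : ℤ)) (min (i : ℤ) (j : ℤ)) else 0

/-- Entrywise power of a one-sided matrix whose rows are supported on `[0, i + B]`:
`(M^n)_{i,j}`. -/
def onePow (M : ℕ → ℕ → ℂ) (B : ℕ) : ℕ → ℕ → ℕ → ℂ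
  | 0, i, j => if i = j then 1 else 0
  | n + 1, i, j => ∑ r ∈ Finset.range (i + B + 1), M i r * onePow M B n r j

/-- The transformation `T` on `q × p` matrices (over a field) with nonzero `(0,0)` entry. -/
def Tmat {F : Type*} [Field F] {q p : ℕ} (hq : 0 < q) (hp : 0 < p)
    (A : Matrix (Fin q) (Fin p) F) : Matrix (Fin q) (Fin p) F := fun i j =>
  if hi : (i : ℕ) + 1 < q then
    if hj : (j : ℕ) + 1 < p then
      (A ⟨(i : ℕ) + 1, hi⟩ ⟨(j : ℕ) + 1, hj⟩ * A ⟨0, hq⟩ ⟨0, hp⟩ -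
          A ⟨0, hq⟩ ⟨(j : ℕ) + 1, hj⟩ * A ⟨(i : ℕ) + 1, hi⟩ ⟨0, hp⟩) / A ⟨0, hq⟩ ⟨0, hp⟩
    else A ⟨(i : ℕ) + 1, hi⟩ ⟨0, hp⟩ / A ⟨0, hq⟩ ⟨0, hp⟩
  else
    if hj : (j : ℕ) + 1 < p then -A ⟨0, hq⟩ ⟨(j : ℕ) + 1, hj⟩ / A ⟨0, hq⟩ ⟨0, hp⟩
    else 1 / A ⟨0, hq⟩ ⟨0, hp⟩

/-- The inverse transformation `T⁻¹` on `q × p` matrices with nonzero `(q-1,p-1)` entry. -/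
def Tinv {F : Type*} [Field F] {q p : ℕ} (hq : 0 < q) (hp : 0 < p)
    (B : Matrix (Fin q) (Fin p) F) : Matrix (Fin q) (Fin p) F := fun i j =>
  if hi : (i : ℕ) = 0 then
    if hj : (j : ℕ) = 0 then
      1 / B ⟨q - 1, Nat.sub_lt hq one_pos⟩ ⟨p - 1, Nat.sub_lt hp one_pos⟩
    else
      -B ⟨q - 1, Nat.sub_lt hq one_pos⟩ ⟨(j : ℕ) - 1, by have := j.isLt; omega⟩ /
        B ⟨q - 1, Nat.sub_lt hq one_pos⟩ ⟨p - 1, Nat.sub_lt hp one_pos⟩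
  else
    if hj : (j : ℕ) = 0 then
      B ⟨(i : ℕ) - 1, by have := i.isLt; omega⟩ ⟨p - 1, Nat.sub_lt hp one_pos⟩ /
        B ⟨q - 1, Nat.sub_lt hq one_pos⟩ ⟨p - 1, Nat.sub_lt hp one_pos⟩
    else
      (B ⟨(i : ℕ) - 1, by have := i.isLt; omega⟩ ⟨(j : ℕ) - 1, by have := j.isLt; omega⟩ *
          B ⟨q - 1, Nat.sub_lt hq one_pos⟩ ⟨p - 1, Nat.sub_lt hp one_pos⟩ -
        B ⟨(i : ℕ) - 1, by have := i.isLt; omega⟩ ⟨p - 1, Nat.sub_lt hp one_pos⟩ *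
          B ⟨q - 1, Nat.sub_lt hq one_pos⟩ ⟨(j : ℕ) - 1, by have := j.isLt; omega⟩) /
        B ⟨q - 1, Nat.sub_lt hq one_pos⟩ ⟨p - 1, Nat.sub_lt hp one_pos⟩

/-- `chainFrom τ k X m = τ_m (τ_{m+1} ( ⋯ (τ_{k-1} X)))`; in particular
`chainFrom τ k X 0 = (τ_0 ∘ τ_1 ∘ ⋯ ∘ τ_{k-1}) X`. -/
def chainFrom {M : Type*} (τ : ℕ → M → M) (k : ℕ) (X : M) (m : ℕ) : M :=
  (List.range (k - m)).foldr (fun t Y => τ (m + t) Y) X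

/-- The `q × p` matrix `α_k(z)`, whose only nonzero entry is `z - a_k^{(0)}` at `(q-1, p-1)`. -/
def alphaZ (q p : ℕ) (a : ℤ → ℤ → ℂ) (k : ℕ) : Matrix (Fin q) (Fin p) LS := fun i j =>
  if (i : ℕ) = q - 1 ∧ (j : ℕ) = p - 1 then zLS - CLS (a 0 (k : ℤ)) else 0

/-- The `q × q` matrix `α_k⁺`: first `q-1` rows of the identity, last row
`(-a_k^{(1)}, …, -a_k^{(q)})`. -/
def alphaP (q : ℕ) (a : ℤ → ℤ → ℂ) (k : ℕ) : Matrix (Fin q) (Fin q) LS := fun i j =>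
  if (i : ℕ) = q - 1 then -CLS (a (((j : ℕ) : ℤ) + 1) (k : ℤ))
  else if i = j then 1 else 0

/-- The `p × p` matrix `α_k⁻`: first `p-1` columns of the identity, last column
`(a_k^{(-1)}, …, a_k^{(-p)})ᵀ`. -/
def alphaM (p : ℕ) (a : ℤ → ℤ → ℂ) (k : ℕ) : Matrix (Fin p) (Fin p) LS := fun i j =>
  if (j : ℕ) = p - 1 then CLS (a (-(((i : ℕ) : ℤ) + 1)) (k : ℤ))
  else if i = j then 1 else 0

/-- `F_r(z)`: the `q × p` matrix of resolvent series of `H^{[r]}` (delete the first `r` rows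
and columns of `H`); `F_0 = F`. -/
def Fmat (p q : ℕ) (a : ℤ → ℤ → ℂ) (r : ℕ) : Matrix (Fin q) (Fin p) LS := fun i j =>
  gen fun n => onePow (fun i' j' => Hmat p q a (i' + r) (j' + r)) q n (i : ℕ) (j : ℕ)

/-- The transformation `τ_{α,k}(X) = T⁻¹(α_k(z) + α_k⁺ X α_k⁻)`. -/
def tauAlpha (p q : ℕ) (hq : 0 < q) (hp : 0 < p) (a : ℤ → ℤ → ℂ) (k : ℕ)
    (X : Matrix (Fin q) (Fin p) LS) : Matrix (Fin q) (Fin p) LS :=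
  Tinv hq hp (alphaZ q p a k + alphaP q a k * X * alphaM p a k)


-- Auxiliary development
lemma gen_congr {b c : ℕ → ℂ} (h : ∀ n, b n = c n) : gen b = gen c := by
  have : PowerSeries.mk b = PowerSeries.mk c := by
    ext n; simp [PowerSeries.coeff_mk, h n]
  unfold gen; rw [this]

lemma mk_add (b c : ℕ → ℂ) :
    PowerSeries.mk b + PowerSeries.mk c = PowerSeries.mk (fun n => b n + c n) := by
  ext n; simp

lemma gen_add (b c : ℕ → ℂ) : gen b + gen c = gen (fun n => b n + c n) := by
  unfold gen
  rw [← mul_add, ← map_add, mk_add]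

lemma gen_zero : gen (fun _ => 0) = 0 := by
  unfold gen
  convert mul_zero (HahnSeries.single (1:ℤ) (1:ℂ)) using 2
  rw [← map_zero (HahnSeries.ofPowerSeries ℤ ℂ)]
  congr 1

lemma gen_sum {ι : Type*} (s : Finset ι) (f : ι → ℕ → ℂ) :
    ∑ i ∈ s, gen (f i) = gen (fun n => ∑ i ∈ s, f i n) := by
  classical
  induction s using Finset.induction with
  | empty => simpa using gen_zero.symm
  | insert _ _ hx ih =>
      rw [Finset.sum_insert hx, ih, gen_add]
      exact gen_congr (by intro n; rw [Finset.sum_insert hx])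

lemma CLS_mul_gen (x : ℂ) (c : ℕ → ℂ) : CLS x * gen c = gen (fun n => x * c n) := by
  unfold CLS gen
  rw [← HahnSeries.ofPowerSeries_C, mul_left_comm, ← map_mul]
  congr 2
  ext n; simp

lemma gen_mul_CLS (x : ℂ) (c : ℕ → ℂ) : gen c * CLS x = gen (fun n => c n * x) := by
  rw [mul_comm, CLS_mul_gen]; exact gen_congr (fun n => mul_comm _ _)

lemma gen_mul_gen (b c : ℕ → ℂ) :
    gen b * gen c = gen (fun n => ∑ m ∈ Finset.range n, b m * c (n - 1 - m)) := by
  have key : PowerSeries.X * (PowerSeries.mk b * PowerSeries.mk c) =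
      PowerSeries.mk (fun n => ∑ m ∈ Finset.range n, b m * c (n - 1 - m)) := by
    ext n
    cases n with
    | zero => simp
    | succ m =>
        rw [PowerSeries.coeff_succ_X_mul, PowerSeries.coeff_mul, PowerSeries.coeff_mk,
          Finset.Nat.sum_antidiagonal_eq_sum_range_succ_mk]
        apply Finset.sum_congr rfl
        intro x hx
        simp only [PowerSeries.coeff_mk]
        congr 2
  have h1 : HahnSeries.single (1:ℤ) (1:ℂ) = (HahnSeries.ofPowerSeries ℤ ℂ) PowerSeries.X :=
    (HahnSeries.ofPowerSeries_X).symm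
  unfold gen
  calc HahnSeries.single (1:ℤ) (1:ℂ) * (HahnSeries.ofPowerSeries ℤ ℂ) (PowerSeries.mk b) *
        (HahnSeries.single (1:ℤ) (1:ℂ) * (HahnSeries.ofPowerSeries ℤ ℂ) (PowerSeries.mk c))
      = HahnSeries.single (1:ℤ) (1:ℂ) * (HahnSeries.ofPowerSeries ℤ ℂ)
          (PowerSeries.X * (PowerSeries.mk b * PowerSeries.mk c)) := by
        rw [map_mul, map_mul, h1]; ring
    _ = _ := by rw [key]

lemma mk_decomp (c : ℕ → ℂ) :
    PowerSeries.mk c = PowerSeries.C (c 0) + PowerSeries.X * PowerSeries.mk (fun n => c (n+1)) := by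
  ext n
  cases n with
  | zero => simp
  | succ m => simp [PowerSeries.coeff_succ_X_mul]

lemma zLS_mul_gen (c : ℕ → ℂ) : zLS * gen c = CLS (c 0) + gen (fun n => c (n + 1)) := by
  unfold zLS gen CLS
  rw [← mul_assoc, HahnSeries.single_mul_single]
  norm_num
  conv_lhs => rw [mk_decomp c]
  simp [HahnSeries.ofPowerSeries_C, map_mul, HahnSeries.ofPowerSeries_X, HahnSeries.C_apply]

lemma gen_eq_zero_iff {c : ℕ → ℂ} : gen c = 0 ↔ ∀ n, c n = 0 := by
  constructor
  · intro h n
    unfold gen at h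
    rcases mul_eq_zero.mp h with h1 | h1
    · have := congrArg (fun x => x.coeff 1) h1
      simp at this
    · have h2 : PowerSeries.mk c = 0 := by
        apply HahnSeries.ofPowerSeries_injective (Γ := ℤ) (R := ℂ)
        rw [h1, map_zero]
      have := congrArg (fun f => PowerSeries.coeff n f) h2
      simpa using this
  · intro h
    rw [gen_congr h]; exact gen_zero


section Comb
variable {B : ℕ} {M : ℕ → ℕ → ℂ}

lemma onePow_zero (i j : ℕ) : onePow M B 0 i j = if i = j then 1 else 0 := rfl

lemma onePow_succ (n i j : ℕ) :
    onePow M B (n + 1) i j = ∑ r ∈ Finset.range (i + B + 1), M i r * onePow M B n r j := rfl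

lemma onePow_eq_zero (hM : ∀ i j, i + B < j → M i j = 0) :
    ∀ n i j, i + n * B < j → onePow M B n i j = 0 := by
  intro n
  induction n with
  | zero => intro i j h; rw [onePow_zero, if_neg]; omega
  | succ n ih =>
      intro i j h
      rw [onePow_succ]
      apply Finset.sum_eq_zero
      intro r hr
      simp only [Finset.mem_range] at hr
      rcases le_or_gt r (i + B) with hr2 | hr2
      · rw [ih r j (by nlinarith [Nat.succ_mul n B]), mul_zero]
      · rw [hM i r (by omega), zero_mul]

lemma onePow_succ_right (hM : ∀ i j, i + B < j → M i j = 0) :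
    ∀ n i j, onePow M B (n + 1) i j =
      ∑ c ∈ Finset.range (i + n * B + 1), onePow M B n i c * M c j := by
  intro n
  induction n with
  | zero =>
      intro i j
      rw [onePow_succ]
      have h1 : ∑ r ∈ Finset.range (i + B + 1), M i r * onePow M B 0 r j
          = ∑ r ∈ Finset.range (i + B + 1), (if r = j then M i j else 0) := by
        apply Finset.sum_congr rfl
        intro r _
        rw [onePow_zero]
        by_cases h : r = j
        · simp [h]
        · simp [h, Ne.symm h]
      rw [h1, Finset.sum_ite_eq' (Finset.range (i + B + 1)) j (fun _ => M i j)]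
      have h2 : ∑ c ∈ Finset.range (i + 0 * B + 1), onePow M B 0 i c * M c j
          = ∑ c ∈ Finset.range (i + 0 * B + 1), (if i = c then M c j else 0) := by
        apply Finset.sum_congr rfl
        intro c _
        rw [onePow_zero]
        by_cases h : i = c <;> simp [h]
      rw [h2, Finset.sum_ite_eq (Finset.range (i + 0 * B + 1)) i (fun c => M c j)]
      simp only [Finset.mem_range]
      by_cases h : j < i + B + 1
      · simp [h]
      · rw [if_neg h, hM i j (by omega)]
        simp
  | succ n ih =>
      intro i j
      rw [onePow_succ]
      have h1 : ∀ s ∈ Finset.range (i + B + 1),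
          M i s * onePow M B (n + 1) s j =
          ∑ c ∈ Finset.range (i + B + n * B + 1), M i s * (onePow M B n s c * M c j) := by
        intro s hs
        simp only [Finset.mem_range] at hs
        rw [ih s j, Finset.mul_sum]
        apply Finset.sum_subset
        · apply Finset.range_subset_range.mpr; omega
        · intro c _ hc
          simp only [Finset.mem_range, not_lt] at hc
          rw [onePow_eq_zero hM n s c (by omega), zero_mul, mul_zero]
      rw [Finset.sum_congr rfl h1, Finset.sum_comm]
      have : i + (n + 1) * B = i + B + n * B := by ring
      rw [this]
      apply Finset.sum_congr rfl
      intro c _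
      rw [onePow_succ, Finset.sum_mul]
      apply Finset.sum_congr rfl
      intro r _
      ring

end Comb

section Walk
variable (p q : ℕ) (a : ℤ → ℤ → ℂ)

def Hs (r : ℕ) : ℕ → ℕ → ℂ := fun i j => Hmat p q a (i + r) (j + r)

def Pw (r n i j : ℕ) : ℂ := onePow (Hs p q a r) q n i j

lemma Hs_succ (r i j : ℕ) : Hs p q a r (i + 1) (j + 1) = Hs p q a (r + 1) i j := by
  have h1 : ((j + 1 + r : ℕ) : ℤ) - ((i + 1 + r : ℕ) : ℤ)
      = ((j + (r + 1) : ℕ) : ℤ) - ((i + (r + 1) : ℕ) : ℤ) := by push_cast; ring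
  have h2 : min ((i + 1 + r : ℕ) : ℤ) ((j + 1 + r : ℕ) : ℤ)
      = min ((i + (r + 1) : ℕ) : ℤ) ((j + (r + 1) : ℕ) : ℤ) := by push_cast; omega
  simp only [Hs, Hmat, h1, h2]

lemma Hs_zero_right {i j : ℕ} (r : ℕ) (h : i + q < j) : Hs p q a r i j = 0 := by
  simp only [Hs, Hmat]
  rw [if_neg]
  push_cast
  omega

lemma Hs_zero_left {i j : ℕ} (r : ℕ) (h : j + p < i) : Hs p q a r i j = 0 := by
  simp only [Hs, Hmat]
  rw [if_neg]
  push_cast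
  omega

lemma Hs_00 (r : ℕ) (hp : 0 < p) (hq : 0 < q) : Hs p q a r 0 0 = a 0 r := by
  simp only [Hs, Hmat]
  rw [if_pos]
  · norm_num
  · constructor <;> push_cast <;> omega

lemma Hs_0s (r s : ℕ) (hs : s < q) : Hs p q a r 0 (s + 1) = a (s + 1) r := by
  simp only [Hs, Hmat]
  rw [if_pos]
  · congr 1 <;> push_cast <;> omega
  · constructor <;> push_cast <;> omega

lemma Hs_t0 (r t : ℕ) (ht : t < p) : Hs p q a r (t + 1) 0 = a (-(t + 1)) r := by
  simp only [Hs, Hmat]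
  rw [if_pos]
  · congr 1 <;> push_cast <;> omega
  · constructor <;> push_cast <;> omega

lemma Hs_vanish (r : ℕ) : ∀ i j, i + q < j → Hs p q a r i j = 0 :=
  fun _ _ h => Hs_zero_right p q a r h

/-- First passage to 0 in exactly m steps, starting from i+1 (walk in Hs r). -/
def FPw (r i : ℕ) : ℕ → ℂ
  | 0 => 0
  | m + 1 => ∑ t ∈ Finset.range p, Pw p q a (r + 1) m i t * Hs p q a r (t + 1) 0

/-- Last exit from 0 followed by walk avoiding 0 ending at j+1, total m steps. -/
def LEw (r j : ℕ) : ℕ → ℂ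
  | 0 => 0
  | m + 1 => ∑ s ∈ Finset.range q, Hs p q a r 0 (s + 1) * Pw p q a (r + 1) m s j

lemma FPw_one (r i : ℕ) : FPw p q a r i 1 = Hs p q a r (i + 1) 0 := by
  show ∑ t ∈ Finset.range p, Pw p q a (r + 1) 0 i t * Hs p q a r (t + 1) 0 = _
  simp only [Pw, onePow_zero]
  rcases lt_or_ge i p with h | h
  · rw [Finset.sum_eq_single i]
    · simp
    · intro b _ hb; simp [Ne.symm hb]
    · intro hi; exact absurd (Finset.mem_range.mpr h) hi
  · rw [Hs_zero_left p q a r (by omega), Finset.sum_eq_zero]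
    intro t ht
    simp only [Finset.mem_range] at ht
    rw [if_neg (by omega), zero_mul]

lemma LEw_one (r j : ℕ) : LEw p q a r j 1 = Hs p q a r 0 (j + 1) := by
  show ∑ s ∈ Finset.range q, Hs p q a r 0 (s + 1) * Pw p q a (r + 1) 0 s j = _
  simp only [Pw, onePow_zero]
  rcases lt_or_ge j q with h | h
  · rw [Finset.sum_eq_single j]
    · simp
    · intro b _ hb; simp [hb]
    · intro hj; exact absurd (Finset.mem_range.mpr h) hj
  · rw [Hs_zero_right p q a r (by omega), Finset.sum_eq_zero]
    intro s hs
    simp only [Finset.mem_range] at hs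
    rw [if_neg (by omega), mul_zero]

lemma FPw_step (r i m : ℕ) :
    ∑ s ∈ Finset.range (i + q + 1), Hs p q a (r + 1) i s * FPw p q a r s (m + 1)
      = FPw p q a r i (m + 2) := by
  show ∑ s ∈ Finset.range (i + q + 1), Hs p q a (r + 1) i s *
      (∑ t ∈ Finset.range p, Pw p q a (r + 1) m s t * Hs p q a r (t + 1) 0)
    = ∑ t ∈ Finset.range p, Pw p q a (r + 1) (m + 1) i t * Hs p q a r (t + 1) 0
  simp only [Finset.mul_sum]
  rw [Finset.sum_comm]
  apply Finset.sum_congr rfl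
  intro t _
  rw [Pw, onePow_succ, Finset.sum_mul]
  apply Finset.sum_congr rfl
  intro s _
  rw [Pw]
  ring

lemma LEw_step (r j m n : ℕ) (hm : m < n) :
    ∑ t ∈ Finset.range (n * q), LEw p q a r t (m + 1) * Hs p q a (r + 1) t j
      = LEw p q a r j (m + 2) := by
  show ∑ t ∈ Finset.range (n * q),
      (∑ s ∈ Finset.range q, Hs p q a r 0 (s + 1) * Pw p q a (r + 1) m s t) *
        Hs p q a (r + 1) t j
    = ∑ s ∈ Finset.range q, Hs p q a r 0 (s + 1) * Pw p q a (r + 1) (m + 1) s j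
  simp only [Finset.sum_mul]
  rw [Finset.sum_comm]
  apply Finset.sum_congr rfl
  intro s hs
  simp only [Finset.mem_range] at hs
  rw [Pw, onePow_succ_right (Hs_vanish p q a (r + 1)) m s j]
  have hsub : Finset.range (s + m * q + 1) ⊆ Finset.range (n * q) := by
    apply Finset.range_subset_range.mpr
    have h1 : m * q + q ≤ n * q := by
      calc m * q + q = (m + 1) * q := by ring
        _ ≤ n * q := Nat.mul_le_mul_right q (by omega)
    omega
  rw [← Finset.sum_subset hsub]
  · rw [Finset.mul_sum]
    apply Finset.sum_congr rfl
    intro t _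
    rw [Pw]
    ring
  · intro t _ ht
    simp only [Finset.mem_range, not_lt] at ht
    rw [Pw, onePow_eq_zero (Hs_vanish p q a (r + 1)) m s t (by omega), mul_zero, zero_mul]

end Walk
section Walk2
variable (p q : ℕ) (a : ℤ → ℤ → ℂ)

lemma first_passage (r : ℕ) : ∀ n i j, Pw p q a r n (i + 1) j =
    (if j = 0 then 0 else Pw p q a (r + 1) n i (j - 1)) +
      ∑ m ∈ Finset.range (n + 1), FPw p q a r i m * Pw p q a r (n - m) 0 j := by
  intro n
  induction n with
  | zero =>
      intro i j
      rw [Finset.sum_range_one]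
      rw [show FPw p q a r i 0 = 0 from rfl, zero_mul, add_zero]
      cases j with
      | zero => simp [Pw, onePow_zero]
      | succ j' =>
          simp only [Nat.succ_ne_zero, if_false, Nat.add_sub_cancel, Pw, onePow_zero]
          by_cases h : i = j' <;> simp [h]
  | succ n ih =>
      intro i j
      have expand : Pw p q a r (n + 1) (i + 1) j
          = (∑ s ∈ Finset.range (i + q + 1),
              Hs p q a r (i + 1) (s + 1) * Pw p q a r n (s + 1) j)
            + Hs p q a r (i + 1) 0 * Pw p q a r n 0 j := by
        show (∑ c ∈ Finset.range (i + 1 + q + 1),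
            Hs p q a r (i + 1) c * onePow (Hs p q a r) q n c j) = _
        rw [show i + 1 + q + 1 = (i + q + 1) + 1 by ring, Finset.sum_range_succ']
        rfl
      rw [expand]
      have step1 : ∀ s ∈ Finset.range (i + q + 1),
          Hs p q a r (i + 1) (s + 1) * Pw p q a r n (s + 1) j
            = Hs p q a (r + 1) i s * (if j = 0 then 0 else Pw p q a (r + 1) n s (j - 1))
              + ∑ m ∈ Finset.range (n + 1),
                  Hs p q a (r + 1) i s * (FPw p q a r s m * Pw p q a r (n - m) 0 j) := by
        intro s _
        rw [Hs_succ p q a r i s, ih s j, mul_add, Finset.mul_sum]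
      rw [Finset.sum_congr rfl step1, Finset.sum_add_distrib]
      have hParA : (∑ s ∈ Finset.range (i + q + 1),
          Hs p q a (r + 1) i s * (if j = 0 then 0 else Pw p q a (r + 1) n s (j - 1)))
          = (if j = 0 then 0 else Pw p q a (r + 1) (n + 1) i (j - 1)) := by
        cases j with
        | zero => simp
        | succ j' =>
            simp only [Nat.succ_ne_zero, if_false, Nat.add_sub_cancel]
            rfl
      have hParB : (∑ s ∈ Finset.range (i + q + 1), ∑ m ∈ Finset.range (n + 1),
            Hs p q a (r + 1) i s * (FPw p q a r s m * Pw p q a r (n - m) 0 j))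
          = ∑ l ∈ Finset.range n, FPw p q a r i (l + 2) * Pw p q a r (n - 1 - l) 0 j := by
        rw [Finset.sum_comm, Finset.sum_range_succ']
        have h0 : (∑ s ∈ Finset.range (i + q + 1),
            Hs p q a (r + 1) i s * (FPw p q a r s 0 * Pw p q a r (n - 0) 0 j)) = 0 := by
          apply Finset.sum_eq_zero; intro s _
          rw [show FPw p q a r s 0 = 0 from rfl]; ring
        rw [h0, add_zero]
        apply Finset.sum_congr rfl
        intro l _
        calc (∑ s ∈ Finset.range (i + q + 1),
              Hs p q a (r + 1) i s * (FPw p q a r s (l + 1) * Pw p q a r (n - (l + 1)) 0 j))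
            = (∑ s ∈ Finset.range (i + q + 1),
              Hs p q a (r + 1) i s * FPw p q a r s (l + 1)) * Pw p q a r (n - (l + 1)) 0 j := by
              rw [Finset.sum_mul]; apply Finset.sum_congr rfl; intro s _; ring
          _ = FPw p q a r i (l + 2) * Pw p q a r (n - 1 - l) 0 j := by
              rw [FPw_step p q a r i l, show n - (l + 1) = n - 1 - l from by omega]
      rw [hParA, hParB]
      have target : (∑ m ∈ Finset.range (n + 1 + 1), FPw p q a r i m * Pw p q a r (n + 1 - m) 0 j)
          = (∑ l ∈ Finset.range n, FPw p q a r i (l + 2) * Pw p q a r (n - 1 - l) 0 j)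
            + FPw p q a r i 1 * Pw p q a r n 0 j := by
        rw [Finset.sum_range_succ', Finset.sum_range_succ']
        rw [show FPw p q a r i 0 = 0 from rfl, zero_mul, add_zero]
        congr 1
        apply Finset.sum_congr rfl
        intro l _
        congr 2
        omega
      rw [target, ← FPw_one p q a r i]
      ring

lemma last_exit (r : ℕ) : ∀ n j, Pw p q a r n 0 (j + 1)
    = ∑ m ∈ Finset.range (n + 1), Pw p q a r (n - m) 0 0 * LEw p q a r j m := by
  intro n
  induction n with
  | zero =>
      intro j
      rw [Finset.sum_range_one, show LEw p q a r j 0 = 0 from rfl, mul_zero]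
      simp [Pw, onePow_zero]
  | succ n ih =>
      intro j
      rw [Pw, onePow_succ_right (Hs_vanish p q a r) n 0 (j + 1), zero_add,
        Finset.sum_range_succ']
      have step1 : ∀ t ∈ Finset.range (n * q),
          onePow (Hs p q a r) q n 0 (t + 1) * Hs p q a r (t + 1) (j + 1)
            = ∑ m ∈ Finset.range (n + 1),
                Pw p q a r (n - m) 0 0 * (LEw p q a r t m * Hs p q a (r + 1) t j) := by
        intro t _
        rw [show onePow (Hs p q a r) q n 0 (t + 1) = Pw p q a r n 0 (t + 1) from rfl,
          ih t, Hs_succ p q a r t j, Finset.sum_mul]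
        apply Finset.sum_congr rfl
        intro m _
        ring
      rw [Finset.sum_congr rfl step1, Finset.sum_comm]
      have step2 : ∀ m ∈ Finset.range (n + 1),
          (∑ t ∈ Finset.range (n * q),
            Pw p q a r (n - m) 0 0 * (LEw p q a r t m * Hs p q a (r + 1) t j))
          = Pw p q a r (n - m) 0 0 *
              (if m = 0 then 0 else LEw p q a r j (m + 1)) := by
        intro m hm
        simp only [Finset.mem_range] at hm
        cases m with
        | zero =>
            rw [if_pos rfl, mul_zero]
            apply Finset.sum_eq_zero; intro t _
            rw [show LEw p q a r t 0 = 0 from rfl]; ring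
        | succ l =>
            rw [if_neg (Nat.succ_ne_zero l)]
            rw [← LEw_step p q a r j l n (by omega), Finset.mul_sum]
      rw [Finset.sum_congr rfl step2]
      have target : (∑ m ∈ Finset.range (n + 1 + 1), Pw p q a r (n + 1 - m) 0 0 * LEw p q a r j m)
          = (∑ m ∈ Finset.range (n + 1),
              Pw p q a r (n - m) 0 0 * (if m = 0 then 0 else LEw p q a r j (m + 1)))
            + Pw p q a r n 0 0 * LEw p q a r j 1 := by
        rw [Finset.sum_range_succ' (fun m => Pw p q a r (n + 1 - m) 0 0 * LEw p q a r j m) (n + 1)]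
        rw [show LEw p q a r j 0 = 0 from rfl, mul_zero, add_zero]
        rw [Finset.sum_range_succ'
          (fun m => Pw p q a r (n + 1 - (m + 1)) 0 0 * LEw p q a r j (m + 1)) n]
        rw [Finset.sum_range_succ'
          (fun m => Pw p q a r (n - m) 0 0 * (if m = 0 then 0 else LEw p q a r j (m + 1))) n]
        rw [if_pos rfl, mul_zero, add_zero]
        congr 1
        apply Finset.sum_congr rfl
        intro l _
        rw [if_neg (Nat.succ_ne_zero l)]
        congr 2
        omega
      rw [target, ← LEw_one p q a r j]
      rfl

end Walk2

section Series
variable (p q : ℕ) (a : ℤ → ℤ → ℂ)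

def fS (r i j : ℕ) : LS := gen fun n => Pw p q a r n i j
def FPs (r i : ℕ) : LS := gen fun m => FPw p q a r i (m + 1)
def LEs (r j : ℕ) : LS := gen fun m => LEw p q a r j (m + 1)

lemma conv_helper (g X : ℕ → ℂ) (hg : g 0 = 0) (n : ℕ) :
    ∑ m ∈ Finset.range (n + 1), g m * X (n - m)
      = ∑ m ∈ Finset.range n, g (m + 1) * X (n - 1 - m) := by
  rw [Finset.sum_range_succ' (fun m => g m * X (n - m)) n, hg, zero_mul, add_zero]
  apply Finset.sum_congr rfl
  intro m _
  congr 2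
  omega

lemma FPs_eq (r i : ℕ) : FPs p q a r i
    = ∑ t ∈ Finset.range p, fS p q a (r + 1) i t * CLS (Hs p q a r (t + 1) 0) := by
  unfold FPs fS
  calc gen (fun m => FPw p q a r i (m + 1))
      = gen (fun m => ∑ t ∈ Finset.range p, Pw p q a (r + 1) m i t * Hs p q a r (t + 1) 0) :=
        gen_congr (fun m => rfl)
    _ = ∑ t ∈ Finset.range p, gen (fun m => Pw p q a (r + 1) m i t * Hs p q a r (t + 1) 0) :=
        (gen_sum _ _).symm
    _ = _ := by
        apply Finset.sum_congr rfl
        intro t _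
        rw [gen_mul_CLS]

lemma LEs_eq (r j : ℕ) : LEs p q a r j
    = ∑ s ∈ Finset.range q, CLS (Hs p q a r 0 (s + 1)) * fS p q a (r + 1) s j := by
  unfold LEs fS
  calc gen (fun m => LEw p q a r j (m + 1))
      = gen (fun m => ∑ s ∈ Finset.range q, Hs p q a r 0 (s + 1) * Pw p q a (r + 1) m s j) :=
        gen_congr (fun m => rfl)
    _ = ∑ s ∈ Finset.range q, gen (fun m => Hs p q a r 0 (s + 1) * Pw p q a (r + 1) m s j) :=
        (gen_sum _ _).symm
    _ = _ := by
        apply Finset.sum_congr rfl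
        intro s _
        rw [CLS_mul_gen]

lemma S1a (r i : ℕ) : fS p q a r (i + 1) 0 = FPs p q a r i * fS p q a r 0 0 := by
  unfold fS FPs
  rw [gen_mul_gen]
  apply gen_congr
  intro n
  rw [first_passage p q a r n i 0, if_pos rfl, zero_add,
    conv_helper (FPw p q a r i) (fun l => Pw p q a r l 0 0) rfl n]

lemma S1b (r i j : ℕ) : fS p q a r (i + 1) (j + 1)
    = fS p q a (r + 1) i j + FPs p q a r i * fS p q a r 0 (j + 1) := by
  unfold fS FPs
  rw [gen_mul_gen, gen_add]
  apply gen_congr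
  intro n
  rw [first_passage p q a r n i (j + 1), if_neg (Nat.succ_ne_zero j), Nat.add_sub_cancel,
    conv_helper (FPw p q a r i) (fun l => Pw p q a r l 0 (j + 1)) rfl n]

lemma S2 (r j : ℕ) : fS p q a r 0 (j + 1) = fS p q a r 0 0 * LEs p q a r j := by
  rw [mul_comm]
  unfold fS LEs
  rw [gen_mul_gen]
  apply gen_congr
  intro n
  rw [last_exit p q a r n j,
    ← conv_helper (LEw p q a r j) (fun l => Pw p q a r l 0 0) rfl n]
  apply Finset.sum_congr rfl
  intro m _
  ring

lemma S3 (r : ℕ) : zLS * fS p q a r 0 0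
    = 1 + ∑ c ∈ Finset.range (q + 1), CLS (Hs p q a r 0 c) * fS p q a r c 0 := by
  unfold fS
  rw [zLS_mul_gen]
  have h0 : Pw p q a r 0 0 0 = 1 := by rw [Pw, onePow_zero, if_pos rfl]
  rw [h0]
  have hC : CLS (1 : ℂ) = (1 : LS) := by unfold CLS; simp
  rw [hC]
  congr 1
  calc gen (fun n => Pw p q a r (n + 1) 0 0)
        = gen (fun n => ∑ c ∈ Finset.range (q + 1), Hs p q a r 0 c * Pw p q a r n c 0) := by
          apply gen_congr
          intro n
          rw [Pw, onePow_succ, Nat.zero_add]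
          rfl
    _ = ∑ c ∈ Finset.range (q + 1), gen (fun n => Hs p q a r 0 c * Pw p q a r n c 0) :=
        (gen_sum _ _).symm
    _ = _ := by
        apply Finset.sum_congr rfl
        intro c _
        rw [CLS_mul_gen]

lemma fS00_ne (r : ℕ) : fS p q a r 0 0 ≠ 0 := by
  unfold fS
  intro h
  have := gen_eq_zero_iff.mp h 0
  rw [Pw, onePow_zero, if_pos rfl] at this
  exact one_ne_zero this

lemma keyE1 (r : ℕ) : fS p q a r 0 0 *
    (zLS - CLS (Hs p q a r 0 0) - ∑ s ∈ Finset.range q, CLS (Hs p q a r 0 (s + 1)) *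
      (∑ t ∈ Finset.range p, fS p q a (r + 1) s t * CLS (Hs p q a r (t + 1) 0))) = 1 := by
  have h3 := S3 p q a r
  rw [Finset.sum_range_succ' (fun c => CLS (Hs p q a r 0 c) * fS p q a r c 0) q] at h3
  have hsub : ∀ s ∈ Finset.range q, CLS (Hs p q a r 0 (s + 1)) * fS p q a r (s + 1) 0
      = CLS (Hs p q a r 0 (s + 1)) *
          ((∑ t ∈ Finset.range p, fS p q a (r + 1) s t * CLS (Hs p q a r (t + 1) 0)) *
            fS p q a r 0 0) := by
    intro s _
    rw [S1a, FPs_eq]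
  rw [Finset.sum_congr rfl hsub] at h3
  have expand : fS p q a r 0 0 *
      (zLS - CLS (Hs p q a r 0 0) - ∑ s ∈ Finset.range q, CLS (Hs p q a r 0 (s + 1)) *
        (∑ t ∈ Finset.range p, fS p q a (r + 1) s t * CLS (Hs p q a r (t + 1) 0)))
      = zLS * fS p q a r 0 0 - CLS (Hs p q a r 0 0) * fS p q a r 0 0
        - ∑ s ∈ Finset.range q, CLS (Hs p q a r 0 (s + 1)) *
            ((∑ t ∈ Finset.range p, fS p q a (r + 1) s t * CLS (Hs p q a r (t + 1) 0)) *
              fS p q a r 0 0) := by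
    have hterm : ∀ s ∈ Finset.range q,
        fS p q a r 0 0 * (CLS (Hs p q a r 0 (s + 1)) *
          (∑ t ∈ Finset.range p, fS p q a (r + 1) s t * CLS (Hs p q a r (t + 1) 0)))
        = CLS (Hs p q a r 0 (s + 1)) *
            ((∑ t ∈ Finset.range p, fS p q a (r + 1) s t * CLS (Hs p q a r (t + 1) 0)) *
              fS p q a r 0 0) := by
      intro s _; ring
    rw [mul_sub, mul_sub, Finset.mul_sum, Finset.sum_congr rfl hterm]
    ring
  rw [expand, h3]
  ring

end Series


section TinvTmat
variable {F : Type*} [Field F] {q p : ℕ} (hq : 0 < q) (hp : 0 < p)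
  (A : Matrix (Fin q) (Fin p) F)

lemma Tmat_ll : Tmat hq hp A ⟨q - 1, Nat.sub_lt hq one_pos⟩ ⟨p - 1, Nat.sub_lt hp one_pos⟩
    = 1 / A ⟨0, hq⟩ ⟨0, hp⟩ := by
  unfold Tmat
  rw [dif_neg (show ¬(q - 1 + 1 < q) by omega)]
  rw [dif_neg (show ¬(p - 1 + 1 < p) by omega)]

lemma Tmat_lr (j : Fin p) (hj : (j : ℕ) + 1 < p) :
    Tmat hq hp A ⟨q - 1, Nat.sub_lt hq one_pos⟩ j
    = -A ⟨0, hq⟩ ⟨(j : ℕ) + 1, hj⟩ / A ⟨0, hq⟩ ⟨0, hp⟩ := by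
  unfold Tmat
  rw [dif_neg (show ¬(q - 1 + 1 < q) by omega), dif_pos hj]

lemma Tmat_rl (i : Fin q) (hi : (i : ℕ) + 1 < q) :
    Tmat hq hp A i ⟨p - 1, Nat.sub_lt hp one_pos⟩
    = A ⟨(i : ℕ) + 1, hi⟩ ⟨0, hp⟩ / A ⟨0, hq⟩ ⟨0, hp⟩ := by
  unfold Tmat
  rw [dif_pos hi, dif_neg (show ¬(p - 1 + 1 < p) by omega)]

lemma Tmat_rr (i : Fin q) (j : Fin p) (hi : (i : ℕ) + 1 < q) (hj : (j : ℕ) + 1 < p) :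
    Tmat hq hp A i j
    = (A ⟨(i : ℕ) + 1, hi⟩ ⟨(j : ℕ) + 1, hj⟩ * A ⟨0, hq⟩ ⟨0, hp⟩ -
        A ⟨0, hq⟩ ⟨(j : ℕ) + 1, hj⟩ * A ⟨(i : ℕ) + 1, hi⟩ ⟨0, hp⟩) / A ⟨0, hq⟩ ⟨0, hp⟩ := by
  unfold Tmat
  rw [dif_pos hi, dif_pos hj]

lemma Tinv_Tmat (hA : A ⟨0, hq⟩ ⟨0, hp⟩ ≠ 0) : Tinv hq hp (Tmat hq hp A) = A := by
  funext i j
  unfold Tinv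
  by_cases hi : (i : ℕ) = 0 <;> by_cases hj : (j : ℕ) = 0
  · rw [dif_pos hi, dif_pos hj, Tmat_ll hq hp A, one_div_one_div,
      show i = ⟨0, hq⟩ from Fin.ext hi, show j = ⟨0, hp⟩ from Fin.ext hj]
  · have hjlt := j.isLt
    have hj1 : (j : ℕ) - 1 + 1 < p := by omega
    rw [dif_pos hi, dif_neg hj, Tmat_ll hq hp A,
      Tmat_lr hq hp A ⟨(j : ℕ) - 1, by omega⟩ hj1,
      show (⟨(j : ℕ) - 1 + 1, hj1⟩ : Fin p) = j from Fin.ext (show (j : ℕ) - 1 + 1 = (j : ℕ) by omega),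
      show i = ⟨0, hq⟩ from Fin.ext hi]
    field_simp
  · have hilt := i.isLt
    have hi1 : (i : ℕ) - 1 + 1 < q := by omega
    rw [dif_neg hi, dif_pos hj, Tmat_ll hq hp A,
      Tmat_rl hq hp A ⟨(i : ℕ) - 1, by omega⟩ hi1,
      show (⟨(i : ℕ) - 1 + 1, hi1⟩ : Fin q) = i from Fin.ext (show (i : ℕ) - 1 + 1 = (i : ℕ) by omega),
      show j = ⟨0, hp⟩ from Fin.ext hj]
    field_simp
  · have hilt := i.isLt
    have hjlt := j.isLt
    have hi1 : (i : ℕ) - 1 + 1 < q := by omega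
    have hj1 : (j : ℕ) - 1 + 1 < p := by omega
    rw [dif_neg hi, dif_neg hj, Tmat_ll hq hp A,
      Tmat_rl hq hp A ⟨(i : ℕ) - 1, by omega⟩ hi1,
      Tmat_lr hq hp A ⟨(j : ℕ) - 1, by omega⟩ hj1,
      Tmat_rr hq hp A ⟨(i : ℕ) - 1, by omega⟩ ⟨(j : ℕ) - 1, by omega⟩ hi1 hj1,
      show (⟨(i : ℕ) - 1 + 1, hi1⟩ : Fin q) = i from Fin.ext (show (i : ℕ) - 1 + 1 = (i : ℕ) by omega),
      show (⟨(j : ℕ) - 1 + 1, hj1⟩ : Fin p) = j from Fin.ext (show (j : ℕ) - 1 + 1 = (j : ℕ) by omega)]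
    field_simp
    ring

end TinvTmat


section Main
variable (p q : ℕ) (a : ℤ → ℤ → ℂ)

lemma Fmat_apply (r : ℕ) (i : Fin q) (j : Fin p) :
    Fmat p q a r i j = fS p q a r (i : ℕ) (j : ℕ) := rfl

lemma mulP (r : ℕ) (X : Matrix (Fin q) (Fin p) LS) (i : Fin q) (t : Fin p) :
    (alphaP q a r * X) i t =
      if (i : ℕ) = q - 1 then
        ∑ s : Fin q, -CLS (a (((s : ℕ) : ℤ) + 1) (r : ℤ)) * X s t
      else X i t := by
  rw [Matrix.mul_apply]
  unfold alphaP
  by_cases hi : (i : ℕ) = q - 1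
  · rw [if_pos hi]
    apply Finset.sum_congr rfl
    intro s _
    rw [if_pos hi]
  · rw [if_neg hi, Finset.sum_eq_single i]
    · rw [if_neg hi, if_pos rfl, one_mul]
    · intro s _ hs
      rw [if_neg hi, if_neg (fun h => hs h.symm), zero_mul]
    · intro h
      exact absurd (Finset.mem_univ i) h

lemma mulM (r : ℕ) (Y : Matrix (Fin q) (Fin p) LS) (i : Fin q) (j : Fin p) :
    (Y * alphaM p a r) i j =
      if (j : ℕ) = p - 1 then
        ∑ t : Fin p, Y i t * CLS (a (-(((t : ℕ) : ℤ) + 1)) (r : ℤ))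
      else Y i j := by
  rw [Matrix.mul_apply]
  unfold alphaM
  by_cases hj : (j : ℕ) = p - 1
  · rw [if_pos hj]
    apply Finset.sum_congr rfl
    intro t _
    rw [if_pos hj]
  · rw [if_neg hj, Finset.sum_eq_single j]
    · rw [if_neg hj, if_pos rfl, mul_one]
    · intro t _ ht
      rw [if_neg hj, if_neg ht, mul_zero]
    · intro h
      exact absurd (Finset.mem_univ j) h

lemma FPs_fin (r i : ℕ) :
    (∑ t : Fin p, fS p q a (r + 1) i (t : ℕ) * CLS (a (-(((t : ℕ) : ℤ) + 1)) (r : ℤ)))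
      = FPs p q a r i := by
  rw [Fin.sum_univ_eq_sum_range
    (fun t => fS p q a (r + 1) i t * CLS (a (-((t : ℤ) + 1)) (r : ℤ))) p, FPs_eq]
  apply Finset.sum_congr rfl
  intro t ht
  rw [Hs_t0 p q a r t (Finset.mem_range.mp ht)]

lemma LEs_fin (r j : ℕ) :
    (∑ s : Fin q, -CLS (a (((s : ℕ) : ℤ) + 1) (r : ℤ)) * fS p q a (r + 1) (s : ℕ) j)
      = -LEs p q a r j := by
  rw [Fin.sum_univ_eq_sum_range
    (fun s => -CLS (a ((s : ℤ) + 1) (r : ℤ)) * fS p q a (r + 1) s j) q, LEs_eq,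
    ← Finset.sum_neg_distrib]
  apply Finset.sum_congr rfl
  intro s hs
  rw [Hs_0s p q a r s (Finset.mem_range.mp hs)]
  ring

variable (hp : 0 < p) (hq : 0 < q)

lemma Tmat_Fmat (r : ℕ) :
    Tmat hq hp (Fmat p q a r)
      = alphaZ q p a r + alphaP q a r * Fmat p q a (r + 1) * alphaM p a r := by
  funext i j
  rw [Matrix.add_apply, mulM p q a r (alphaP q a r * Fmat p q a (r + 1)) i j]
  by_cases hi : (i : ℕ) + 1 < q <;> by_cases hj : (j : ℕ) + 1 < p
  · -- generic entry
    have hi' : (i : ℕ) ≠ q - 1 := by omega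
    have hj' : (j : ℕ) ≠ p - 1 := by omega
    rw [Tmat_rr hq hp (Fmat p q a r) i j hi hj, if_neg hj',
      mulP p q a r (Fmat p q a (r + 1)) i j, if_neg hi',
      show alphaZ q p a r i j = 0 from if_neg (fun h => hi' h.1)]
    rw [show Fmat p q a r ⟨(i : ℕ) + 1, hi⟩ ⟨(j : ℕ) + 1, hj⟩
        = fS p q a r ((i : ℕ) + 1) ((j : ℕ) + 1) from rfl,
      show Fmat p q a r ⟨0, hq⟩ ⟨0, hp⟩ = fS p q a r 0 0 from rfl,
      show Fmat p q a r ⟨0, hq⟩ ⟨(j : ℕ) + 1, hj⟩ = fS p q a r 0 ((j : ℕ) + 1) from rfl,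
      show Fmat p q a r ⟨(i : ℕ) + 1, hi⟩ ⟨0, hp⟩ = fS p q a r ((i : ℕ) + 1) 0 from rfl,
      Fmat_apply, S1b, S1a, S2]
    have h00 := fS00_ne p q a r
    field_simp
    all_goals ring
  · -- column p-1, row generic
    have hi' : (i : ℕ) ≠ q - 1 := by omega
    have hj' : (j : ℕ) = p - 1 := by have := j.isLt; omega
    rw [show j = ⟨p - 1, Nat.sub_lt hp one_pos⟩ from Fin.ext hj']
    rw [Tmat_rl hq hp (Fmat p q a r) i hi, if_pos (show p - 1 = p - 1 from rfl)]
    have hsum : ∀ t : Fin p, t ∈ Finset.univ →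
        (alphaP q a r * Fmat p q a (r + 1)) i t * CLS (a (-(((t : ℕ) : ℤ) + 1)) (r : ℤ))
        = fS p q a (r + 1) (i : ℕ) (t : ℕ) * CLS (a (-(((t : ℕ) : ℤ) + 1)) (r : ℤ)) := by
      intro t _
      rw [mulP p q a r (Fmat p q a (r + 1)) i t, if_neg hi', Fmat_apply]
    rw [Finset.sum_congr rfl hsum, FPs_fin p q a r i,
      show alphaZ q p a r i ⟨p - 1, Nat.sub_lt hp one_pos⟩ = 0 from if_neg (fun h => hi' h.1)]
    rw [show Fmat p q a r ⟨(i : ℕ) + 1, hi⟩ ⟨0, hp⟩ = fS p q a r ((i : ℕ) + 1) 0 from rfl,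
      show Fmat p q a r ⟨0, hq⟩ ⟨0, hp⟩ = fS p q a r 0 0 from rfl, S1a]
    have h00 := fS00_ne p q a r
    field_simp
    ring
  · -- row q-1, column generic
    have hi' : (i : ℕ) = q - 1 := by have := i.isLt; omega
    have hj' : (j : ℕ) ≠ p - 1 := by omega
    rw [show i = ⟨q - 1, Nat.sub_lt hq one_pos⟩ from Fin.ext hi']
    rw [Tmat_lr hq hp (Fmat p q a r) j hj, if_neg hj',
      mulP p q a r (Fmat p q a (r + 1)) ⟨q - 1, Nat.sub_lt hq one_pos⟩ j,
      if_pos (show q - 1 = q - 1 from rfl),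
      show alphaZ q p a r ⟨q - 1, Nat.sub_lt hq one_pos⟩ j = 0 from if_neg (fun h => hj' h.2)]
    have hsum : ∀ s : Fin q, s ∈ Finset.univ →
        -CLS (a (((s : ℕ) : ℤ) + 1) (r : ℤ)) * Fmat p q a (r + 1) s j
        = -CLS (a (((s : ℕ) : ℤ) + 1) (r : ℤ)) * fS p q a (r + 1) (s : ℕ) (j : ℕ) := by
      intro s _
      rw [Fmat_apply]
    rw [Finset.sum_congr rfl hsum, LEs_fin p q a r j,
      show Fmat p q a r ⟨0, hq⟩ ⟨(j : ℕ) + 1, hj⟩ = fS p q a r 0 ((j : ℕ) + 1) from rfl,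
      show Fmat p q a r ⟨0, hq⟩ ⟨0, hp⟩ = fS p q a r 0 0 from rfl, S2]
    have h00 := fS00_ne p q a r
    field_simp
    all_goals ring
  · -- corner
    have hi' : (i : ℕ) = q - 1 := by have := i.isLt; omega
    have hj' : (j : ℕ) = p - 1 := by have := j.isLt; omega
    rw [show i = ⟨q - 1, Nat.sub_lt hq one_pos⟩ from Fin.ext hi']
    rw [show j = ⟨p - 1, Nat.sub_lt hp one_pos⟩ from Fin.ext hj']
    rw [Tmat_ll hq hp (Fmat p q a r), if_pos (show p - 1 = p - 1 from rfl),
      show alphaZ q p a r ⟨q - 1, Nat.sub_lt hq one_pos⟩ ⟨p - 1, Nat.sub_lt hp one_pos⟩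
        = zLS - CLS (a 0 (r : ℤ)) from if_pos ⟨rfl, rfl⟩,
      show Fmat p q a r ⟨0, hq⟩ ⟨0, hp⟩ = fS p q a r 0 0 from rfl]
    have hsum : ∀ t : Fin p, t ∈ Finset.univ →
        (alphaP q a r * Fmat p q a (r + 1)) ⟨q - 1, Nat.sub_lt hq one_pos⟩ t *
            CLS (a (-(((t : ℕ) : ℤ) + 1)) (r : ℤ))
        = (∑ s : Fin q, -CLS (a (((s : ℕ) : ℤ) + 1) (r : ℤ)) *
            fS p q a (r + 1) (s : ℕ) (t : ℕ)) * CLS (a (-(((t : ℕ) : ℤ) + 1)) (r : ℤ)) := by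
      intro t _
      rw [mulP p q a r (Fmat p q a (r + 1)) ⟨q - 1, Nat.sub_lt hq one_pos⟩ t,
        if_pos (show q - 1 = q - 1 from rfl)]
      rfl
    rw [Finset.sum_congr rfl hsum]
    have hdd : (∑ t : Fin p, (∑ s : Fin q, -CLS (a (((s : ℕ) : ℤ) + 1) (r : ℤ)) *
          fS p q a (r + 1) (s : ℕ) (t : ℕ)) * CLS (a (-(((t : ℕ) : ℤ) + 1)) (r : ℤ)))
        = -∑ s ∈ Finset.range q, CLS (Hs p q a r 0 (s + 1)) *
            (∑ t ∈ Finset.range p, fS p q a (r + 1) s t * CLS (Hs p q a r (t + 1) 0)) := by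
      have h1 : ∀ t : Fin p, t ∈ Finset.univ →
          (∑ s : Fin q, -CLS (a (((s : ℕ) : ℤ) + 1) (r : ℤ)) *
            fS p q a (r + 1) (s : ℕ) (t : ℕ)) * CLS (a (-(((t : ℕ) : ℤ) + 1)) (r : ℤ))
          = -(LEs p q a r (t : ℕ) * CLS (a (-(((t : ℕ) : ℤ) + 1)) (r : ℤ))) := by
        intro t _
        rw [LEs_fin p q a r (t : ℕ)]
        ring
      rw [Finset.sum_congr rfl h1, Finset.sum_neg_distrib, neg_inj,
        Fin.sum_univ_eq_sum_range
          (fun t => LEs p q a r t * CLS (a (-((t : ℤ) + 1)) (r : ℤ))) p]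
      have h2 : ∀ t ∈ Finset.range p,
          LEs p q a r t * CLS (a (-((t : ℤ) + 1)) (r : ℤ))
          = ∑ s ∈ Finset.range q, CLS (Hs p q a r 0 (s + 1)) *
              (fS p q a (r + 1) s t * CLS (Hs p q a r (t + 1) 0)) := by
        intro t ht
        rw [Hs_t0 p q a r t (Finset.mem_range.mp ht), LEs_eq, Finset.sum_mul]
        apply Finset.sum_congr rfl
        intro s _
        ring
      rw [Finset.sum_congr rfl h2, Finset.sum_comm]
      apply Finset.sum_congr rfl
      intro s _
      rw [Finset.mul_sum]
    rw [hdd]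
    have hkey := keyE1 p q a r
    rw [show Hs p q a r 0 0 = a 0 (r : ℤ) from Hs_00 p q a r hp hq] at hkey
    rw [← sub_eq_add_neg]
    exact (eq_one_div_of_mul_eq_one_right hkey).symm

end Main

lemma Fmat00_ne (p q : ℕ) (a : ℤ → ℤ → ℂ) (hp : 0 < p) (hq : 0 < q) (r : ℕ) :
    Fmat p q a r ⟨0, hq⟩ ⟨0, hp⟩ ≠ 0 := by
  show fS p q a r 0 0 ≠ 0
  exact fS00_ne p q a r

lemma tau_step (p q : ℕ) (a : ℤ → ℤ → ℂ) (hp : 0 < p) (hq : 0 < q) (r : ℕ) :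
    tauAlpha p q hq hp a r (Fmat p q a (r + 1)) = Fmat p q a r := by
  unfold tauAlpha
  rw [← Tmat_Fmat p q a hp hq r, Tinv_Tmat hq hp (Fmat p q a r) (Fmat00_ne p q a hp hq r)]

lemma arg_ne (p q : ℕ) (a : ℤ → ℤ → ℂ) (hp : 0 < p) (hq : 0 < q) (r : ℕ) :
    (alphaZ q p a r + alphaP q a r * Fmat p q a (r + 1) * alphaM p a r)
      ⟨q - 1, Nat.sub_lt hq one_pos⟩ ⟨p - 1, Nat.sub_lt hp one_pos⟩ ≠ 0 := by
  rw [← Tmat_Fmat p q a hp hq r, Tmat_ll hq hp (Fmat p q a r)]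
  exact one_div_ne_zero (Fmat00_ne p q a hp hq r)

lemma chainFrom_self {M : Type*} (τ : ℕ → M → M) (k : ℕ) (X : M) :
    chainFrom τ k X k = X := by
  unfold chainFrom
  rw [Nat.sub_self]
  rfl

lemma chainFrom_step {M : Type*} (τ : ℕ → M → M) (k : ℕ) (X : M) (m : ℕ) (h : m < k) :
    chainFrom τ k X m = τ m (chainFrom τ k X (m + 1)) := by
  unfold chainFrom
  rw [show k - m = (k - (m + 1)) + 1 by omega, List.range_succ_eq_map, List.foldr_cons,
    List.foldr_map]
  rw [Nat.add_zero]
  have hfun : (fun (x : ℕ) (y : M) => τ (m + x.succ) y) = fun t Y => τ (m + 1 + t) Y := by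
    funext t Y
    rw [show m + t.succ = m + 1 + t by omega]
  rw [hfun]

lemma chain_eq (p q : ℕ) (a : ℤ → ℤ → ℂ) (hp : 0 < p) (hq : 0 < q) (k : ℕ) :
    ∀ m, m ≤ k →
      chainFrom (tauAlpha p q hq hp a) k (Fmat p q a k) m = Fmat p q a m := by
  have key : ∀ d m, m + d = k →
      chainFrom (tauAlpha p q hq hp a) k (Fmat p q a k) m = Fmat p q a m := by
    intro d
    induction d with
    | zero =>
        intro m hm
        have : m = k := by omega
        subst this
        exact chainFrom_self _ _ _
    | succ d ih =>
        intro m hm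
        rw [chainFrom_step _ _ _ _ (by omega), ih (m + 1) (by omega),
          tau_step p q a hp hq m]
  intro m hm
  exact key (k - m) m (by omega)


/-- **Theorem 6.2** (matrix continued fraction for `F(z)`): for every `k ≥ 1`, all the
transformations `τ_{α,m}` in the composition are defined (the `(q-1,p-1)` entry of the
argument of `T⁻¹` is nonzero at each stage) and
`F(z) = (τ_{α,0} ∘ τ_{α,1} ∘ ⋯ ∘ τ_{α,k-1})(F_k(z))`. -/
theorem matrix_continued_fraction_for_F
    (p q : ℕ) (hp : 0 < p) (hq : 0 < q) (a : ℤ → ℤ → ℂ) (k : ℕ) (hk : 1 ≤ k) :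
    (∀ m < k,
      (alphaZ q p a m +
          alphaP q a m * chainFrom (tauAlpha p q hq hp a) k (Fmat p q a k) (m + 1) *
            alphaM p a m)
          ⟨q - 1, Nat.sub_lt hq one_pos⟩ ⟨p - 1, Nat.sub_lt hp one_pos⟩ ≠ 0) ∧
    Fmat p q a 0 = chainFrom (tauAlpha p q hq hp a) k (Fmat p q a k) 0 := by

  constructor
  · intro m hm
    rw [chain_eq p q a hp hq k (m + 1) (by omega)]
    exact arg_ne p q a hp hq m
  · exact (chain_eq p q a hp hq k 0 (by omega)).symm
end
end

section
/- Let n ≥ 1, let 0 ≤ i,j ≤ n−1, and set L := ⌊(n−1−i)/q⌋ + ⌊(n−1−j)/p⌋ + 1. Then for every integer 0 ≤ ℓ ≤ L one has D_{[ℓ,i,j,n]} = D_{[ℓ,i,j]}, and hence A_{[ℓ,i,j,n]} = A_{[ℓ,i,j]}. Consequently A_{i,j}(z) − R_{i,j,n}(z) = O(z^{−L−2}) as z → ∞; that is, the coefficients of z^{−ℓ−1} in A_{i,j}(z) and in R_{i,j,n}(z) agree for all 0 ≤ ℓ ≤ L. -/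
open scoped BigOperators
open Finset

noncomputable section

/-- The principal `n × n` truncation `H_n` of the banded matrix `H`. -/
def Hnmat (p q : ℕ) (a : ℤ → ℤ → ℂ) (n : ℕ) : Matrix (Fin n) (Fin n) ℂ := fun i j =>
  if -(p : ℤ) ≤ ((j : ℕ) : ℤ) - ((i : ℕ) : ℤ) ∧ ((j : ℕ) : ℤ) - ((i : ℕ) : ℤ) ≤ (q : ℤ) then
    a (((j : ℕ) : ℤ) - ((i : ℕ) : ℤ)) (min ((i : ℕ) : ℤ) ((j : ℕ) : ℤ)) else 0

/-- The collection `D_{[ℓ,i,j]}` of paths (given by their step sequences) of length `ℓ` from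
`(0,i)` to `(ℓ,j)` staying at height `≥ 0`. -/
def Dset (p q ℓ : ℕ) (i j : ℤ) : Finset (Fin ℓ → ℤ) :=
  (steps p q ℓ).filter fun s => hgt i (ext s) ℓ = j ∧ ∀ k ≤ ℓ, 0 ≤ hgt i (ext s) k

/-- The collection `D_{[ℓ,i,j,N]}` of paths of length `ℓ` from `(0,i)` to `(ℓ,j)` with all
heights in `{0, …, N-1}`. -/
def DboxSet (p q N ℓ : ℕ) (i j : ℤ) : Finset (Fin ℓ → ℤ) :=
  (steps p q ℓ).filter fun s =>
    hgt i (ext s) ℓ = j ∧ ∀ k ≤ ℓ, 0 ≤ hgt i (ext s) k ∧ hgt i (ext s) k ≤ (N : ℤ) - 1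

section Helpers

variable {p q : ℕ} {a : ℤ → ℤ → ℂ}

lemma hgt_zero (i : ℤ) (σ : ℕ → ℤ) : hgt i σ 0 = i := by simp [hgt]

lemma ext_cons_zero {ℓ : ℕ} (x : ℤ) (s : Fin ℓ → ℤ) : ext (Fin.cons x s) 0 = x := by
  unfold _root_.ext
  rw [dif_pos (Nat.succ_pos ℓ)]
  exact Fin.cons_zero (α := fun _ : Fin (ℓ + 1) => ℤ) x s

lemma ext_cons_succ {ℓ : ℕ} (x : ℤ) (s : Fin ℓ → ℤ) (t : ℕ) :
    ext (Fin.cons x s) (t + 1) = ext s t := by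
  unfold _root_.ext
  by_cases h : t < ℓ
  · rw [dif_pos (by omega : t + 1 < ℓ + 1), dif_pos h]
    exact Fin.cons_succ (α := fun _ : Fin (ℓ + 1) => ℤ) x s ⟨t, h⟩
  · rw [dif_neg (by omega), dif_neg h]

lemma hgt_cons {ℓ : ℕ} (i x : ℤ) (s : Fin ℓ → ℤ) (k : ℕ) :
    hgt i (ext (Fin.cons x s)) (k + 1) = hgt (i + x) (ext s) k := by
  unfold hgt
  rw [Finset.sum_range_succ']
  simp only [ext_cons_succ, ext_cons_zero]
  ring

lemma wgt_cons {ℓ : ℕ} (i x : ℤ) (s : Fin ℓ → ℤ) :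
    wgt a (ℓ + 1) i (ext (Fin.cons x s)) = stepW a i x * wgt a ℓ (i + x) (ext s) := by
  unfold wgt
  rw [Finset.prod_range_succ']
  rw [hgt_zero, ext_cons_zero, mul_comm]
  congr 1
  refine Finset.prod_congr rfl fun k _ => ?_
  rw [hgt_cons, ext_cons_succ]

lemma sum_steps_succ {ℓ : ℕ} (f : (Fin (ℓ + 1) → ℤ) → ℂ) :
    ∑ s ∈ steps p q (ℓ + 1), f s
      = ∑ x ∈ Finset.Icc (-(p : ℤ)) (q : ℤ), ∑ s ∈ steps p q ℓ, f (Fin.cons x s) := by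
  have h1 : ∑ xs ∈ Finset.Icc (-(p : ℤ)) (q : ℤ) ×ˢ steps p q ℓ, f (Fin.cons xs.1 xs.2)
      = ∑ x ∈ Finset.Icc (-(p : ℤ)) (q : ℤ), ∑ s ∈ steps p q ℓ, f (Fin.cons x s) :=
    Finset.sum_product _ _ _
  rw [← h1]
  refine Finset.sum_bij' (fun (s : Fin (ℓ + 1) → ℤ) (_ : s ∈ steps p q (ℓ + 1)) =>
      ((s 0, Fin.tail s) : ℤ × (Fin ℓ → ℤ)))
    (fun (xs : ℤ × (Fin ℓ → ℤ)) _ => Fin.cons xs.1 xs.2) ?_ ?_ ?_ ?_ ?_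
  · intro s hs
    rw [Finset.mem_product]
    rw [steps, Fintype.mem_piFinset] at hs
    exact ⟨hs 0, by rw [steps, Fintype.mem_piFinset]; intro t; exact hs t.succ⟩
  · intro xs hxs
    rw [Finset.mem_product] at hxs
    rw [steps, Fintype.mem_piFinset]
    intro t
    show Fin.cons (α := fun _ : Fin (ℓ + 1) => ℤ) xs.1 xs.2 t ∈ Finset.Icc (-(p : ℤ)) (q : ℤ)
    rcases Fin.eq_zero_or_eq_succ t with h | ⟨t', rfl⟩
    · rw [h, Fin.cons_zero]; exact hxs.1
    · rw [Fin.cons_succ]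
      exact (Fintype.mem_piFinset.1 hxs.2) t'
  · intro s _; exact Fin.cons_self_tail s
  · intro xs _; simp [Fin.tail_cons]
  · intro s _; exact congrArg f (Fin.cons_self_tail s).symm

lemma Abox_out {N ℓ : ℕ} {i j : ℤ} (h : ¬(0 ≤ i ∧ i ≤ (N : ℤ) - 1)) :
    Aboxpoly p q a N ℓ i j = 0 := by
  refine Finset.sum_eq_zero fun s _ => ?_
  rw [if_neg]
  rintro ⟨-, h2⟩
  exact h (by simpa [hgt_zero] using h2 0 (Nat.zero_le _))

lemma Abox_succ (N ℓ : ℕ) (i j : ℤ) :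
    Aboxpoly p q a N (ℓ + 1) i j =
      if 0 ≤ i ∧ i ≤ (N : ℤ) - 1 then
        ∑ x ∈ Finset.Icc (-(p : ℤ)) (q : ℤ), stepW a i x * Aboxpoly p q a N ℓ (i + x) j
      else 0 := by
  unfold Aboxpoly
  rw [sum_steps_succ]
  by_cases hP : 0 ≤ i ∧ i ≤ (N : ℤ) - 1
  · rw [if_pos hP]
    refine Finset.sum_congr rfl fun x _ => ?_
    rw [Finset.mul_sum]
    refine Finset.sum_congr rfl fun s _ => ?_
    rw [wgt_cons, mul_ite, mul_zero]
    refine if_congr ?_ rfl rfl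
    constructor
    · rintro ⟨h1, h2⟩
      refine ⟨by rw [← hgt_cons]; exact h1, fun k hk => ?_⟩
      rw [← hgt_cons]
      exact h2 (k + 1) (by omega)
    · rintro ⟨h1, h2⟩
      refine ⟨by rw [hgt_cons]; exact h1, fun k hk => ?_⟩
      cases k with
      | zero => rw [hgt_zero]; exact hP
      | succ k' => rw [hgt_cons]; exact h2 k' (by omega)
  · rw [if_neg hP]
    refine Finset.sum_eq_zero fun x _ => Finset.sum_eq_zero fun s _ => ?_
    rw [if_neg]
    rintro ⟨-, h2⟩
    exact hP (by simpa [hgt_zero] using h2 0 (Nat.zero_le _))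

lemma stepW_eq_min (i m : ℤ) : stepW a i (m - i) = a (m - i) (min i m) := by
  unfold stepW
  rcases le_or_gt i m with h | h
  · rw [if_pos (by omega), min_eq_left h]
  · rw [if_neg (by omega), min_eq_right h.le]
    congr 1
    omega

end Helpers

section Main

variable {p q : ℕ} {a : ℤ → ℤ → ℂ}

lemma Hnmat_eq_stepW (N : ℕ) (i k : Fin N) :
    Hnmat p q a N i k =
      if -(p : ℤ) ≤ (k : ℤ) - (i : ℤ) ∧ (k : ℤ) - (i : ℤ) ≤ (q : ℤ) then
        stepW a (i : ℤ) ((k : ℤ) - (i : ℤ)) else 0 := by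
  unfold Hnmat
  by_cases h : -(p : ℤ) ≤ (k : ℤ) - (i : ℤ) ∧ (k : ℤ) - (i : ℤ) ≤ (q : ℤ)
  · rw [if_pos h, if_pos h, stepW_eq_min]
  · rw [if_neg h, if_neg h]

lemma pow_entry (N ℓ : ℕ) (i j : Fin N) :
    (Hnmat p q a N ^ ℓ) i j = Aboxpoly p q a N ℓ (i : ℤ) (j : ℤ) := by
  induction ℓ generalizing i with
  | zero =>
    rw [pow_zero, Matrix.one_apply]
    have hsteps : steps p q 0 = {fun t : Fin 0 => (0 : ℤ)} := by
      ext s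
      simp only [steps, Fintype.mem_piFinset, Finset.mem_singleton]
      constructor
      · intro _; exact funext fun t => t.elim0
      · intro _ t; exact t.elim0
    unfold Aboxpoly
    rw [hsteps, Finset.sum_singleton]
    have hw : wgt a 0 (i : ℤ) (ext fun t : Fin 0 => (0 : ℤ)) = 1 := by
      simp [wgt]
    have hcond : (∀ k ≤ 0, 0 ≤ hgt (i : ℤ) (ext fun t : Fin 0 => (0:ℤ)) k ∧
        hgt (i : ℤ) (ext fun t : Fin 0 => (0:ℤ)) k ≤ (N : ℤ) - 1) := by
      intro k hk
      interval_cases k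
      rw [hgt_zero]
      have := i.2
      constructor <;> [positivity; omega]
    rw [hgt_zero, hw]
    by_cases hij : i = j
    · rw [if_pos hij, if_pos ⟨by exact_mod_cast congrArg (fun t : Fin N => ((t : ℕ) : ℤ)) hij,
        hcond⟩]
    · rw [if_neg hij, if_neg]
      rintro ⟨h1, -⟩
      exact hij (Fin.ext (by exact_mod_cast h1))
  | succ ℓ ih =>
    rw [pow_succ', Matrix.mul_apply, Abox_succ, if_pos ⟨by positivity, by
      have := i.2; omega⟩]
    -- define G
    set G : ℤ → ℂ := fun m =>
      (if -(p : ℤ) ≤ m - (i : ℤ) ∧ m - (i : ℤ) ≤ (q : ℤ) then stepW a (i : ℤ) (m - (i : ℤ))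
        else 0) * Aboxpoly p q a N ℓ m (j : ℤ) with hG
    have hGout1 : ∀ m : ℤ, ¬(0 ≤ m ∧ m ≤ (N : ℤ) - 1) → G m = 0 := by
      intro m hm; rw [hG]; simp only; rw [Abox_out hm, mul_zero]
    have hGout2 : ∀ m : ℤ, ¬(-(p : ℤ) ≤ m - (i : ℤ) ∧ m - (i : ℤ) ≤ (q : ℤ)) → G m = 0 := by
      intro m hm; rw [hG]; simp only; rw [if_neg hm, zero_mul]
    have hL : ∑ k : Fin N, Hnmat p q a N i k * (Hnmat p q a N ^ ℓ) k j
        = ∑ m ∈ Finset.Icc (0 : ℤ) ((N : ℤ) - 1), G m := by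
      refine Finset.sum_bij' (fun (k : Fin N) _ => ((k : ℕ) : ℤ))
        (fun m hm => (⟨m.toNat, by
          rw [Finset.mem_Icc] at hm; omega⟩ : Fin N)) ?_ ?_ ?_ ?_ ?_
      · intro k _
        simp only [Finset.mem_Icc]
        have := k.2
        constructor <;> omega
      · intro m _; exact Finset.mem_univ _
      · intro k _; exact Fin.ext (by simp)
      · intro m hm
        rw [Finset.mem_Icc] at hm
        show ((m.toNat : ℕ) : ℤ) = m
        omega
      · intro k _
        rw [Hnmat_eq_stepW, ih, hG]
    have hR : ∑ x ∈ Finset.Icc (-(p : ℤ)) (q : ℤ), stepW a (i : ℤ) x *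
          Aboxpoly p q a N ℓ ((i : ℤ) + x) (j : ℤ)
        = ∑ m ∈ Finset.Icc ((i : ℤ) - p) ((i : ℤ) + q), G m := by
      refine Finset.sum_bij' (fun x _ => (i : ℤ) + x) (fun m _ => m - (i : ℤ)) ?_ ?_ ?_ ?_ ?_
      · intro x hx; simp only [Finset.mem_Icc] at hx ⊢; omega
      · intro m hm; simp only [Finset.mem_Icc] at hm ⊢; omega
      · intro x _; show (i : ℤ) + x - (i : ℤ) = x; ring
      · intro m _; show (i : ℤ) + (m - (i : ℤ)) = m; ring
      · intro x hx
        rw [Finset.mem_Icc] at hx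
        rw [hG]
        simp only [add_sub_cancel_left]
        rw [if_pos ⟨hx.1, hx.2⟩]
    rw [hL, hR]
    set S : Finset ℤ := Finset.Icc (min ((i : ℤ) - p) 0) (max ((i : ℤ) + q) ((N : ℤ) - 1))
      with hS
    rw [show (∑ m ∈ Finset.Icc (0 : ℤ) ((N : ℤ) - 1), G m) = ∑ m ∈ S, G m from
      Finset.sum_subset (by rw [hS]; apply Finset.Icc_subset_Icc <;> omega)
        (fun m _ hm => hGout1 m (by rw [Finset.mem_Icc] at hm; omega))]
    rw [show (∑ m ∈ Finset.Icc ((i : ℤ) - p) ((i : ℤ) + q), G m) = ∑ m ∈ S, G m from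
      Finset.sum_subset (by rw [hS]; apply Finset.Icc_subset_Icc <;> omega)
        (fun m _ hm => hGout2 m (by rw [Finset.mem_Icc] at hm; omega))]

lemma gen_coeff (c : ℕ → ℂ) (ℓ : ℕ) : (gen c).coeff ((ℓ : ℤ) + 1) = c ℓ := by
  unfold gen
  rw [HahnSeries.coeff_single_mul_add, one_mul, HahnSeries.ofPowerSeries_apply_coeff,
    PowerSeries.coeff_mk]

end Main

section Combin

variable {p q : ℕ}

lemma hgt_upper {ℓ : ℕ} {s : Fin ℓ → ℤ} (hs : s ∈ steps p q ℓ) (i : ℤ) (k : ℕ) (hk : k ≤ ℓ) :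
    hgt i (ext s) k ≤ i + (q : ℤ) * k := by
  unfold hgt
  have hb : ∑ t ∈ Finset.range k, ext s t ≤ ∑ t ∈ Finset.range k, (q : ℤ) := by
    refine Finset.sum_le_sum fun t ht => ?_
    rw [Finset.mem_range] at ht
    have htℓ : t < ℓ := lt_of_lt_of_le ht hk
    rw [show ext s t = s ⟨t, htℓ⟩ from dif_pos htℓ]
    exact (Finset.mem_Icc.1 ((Fintype.mem_piFinset.1 hs) ⟨t, htℓ⟩)).2
  rw [Finset.sum_const, Finset.card_range, nsmul_eq_mul] at hb
  have hc : (k : ℤ) * (q : ℤ) = (q : ℤ) * (k : ℤ) := mul_comm _ _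
  omega

lemma hgt_lower_seg {ℓ : ℕ} {s : Fin ℓ → ℤ} (hs : s ∈ steps p q ℓ) (i : ℤ) (k : ℕ) (hk : k ≤ ℓ) :
    hgt i (ext s) ℓ ≥ hgt i (ext s) k - (p : ℤ) * ((ℓ - k : ℕ) : ℤ) := by
  unfold hgt
  have hsplit : ∑ t ∈ Finset.range ℓ, ext s t
      = ∑ t ∈ Finset.range k, ext s t + ∑ t ∈ Finset.Ico k ℓ, ext s t := by
    rw [Finset.range_eq_Ico, Finset.range_eq_Ico]
    exact (Finset.sum_Ico_consecutive (ext s) (Nat.zero_le k) hk).symm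
  have hlow : ∑ t ∈ Finset.Ico k ℓ, (-(p : ℤ)) ≤ ∑ t ∈ Finset.Ico k ℓ, ext s t := by
    refine Finset.sum_le_sum fun t ht => ?_
    rw [Finset.mem_Ico] at ht
    rw [show ext s t = s ⟨t, ht.2⟩ from dif_pos ht.2]
    exact (Finset.mem_Icc.1 ((Fintype.mem_piFinset.1 hs) ⟨t, ht.2⟩)).1
  rw [Finset.sum_const, Nat.card_Ico, nsmul_eq_mul] at hlow
  have hc : ((ℓ - k : ℕ) : ℤ) * (-(p : ℤ)) = -((p : ℤ) * ((ℓ - k : ℕ) : ℤ)) := by ring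
  omega

lemma box_auto {n : ℕ} {i j : ℕ} (hq : 1 ≤ q) (hp : 1 ≤ p) (hi : i < n) (hj : j < n)
    {ℓ : ℕ} (hℓ : ℓ ≤ (n - 1 - i) / q + (n - 1 - j) / p + 1)
    {s : Fin ℓ → ℤ} (hs : s ∈ steps p q ℓ)
    (hend : hgt (i : ℤ) (ext s) ℓ = (j : ℤ))
    {k : ℕ} (hk : k ≤ ℓ) : hgt (i : ℤ) (ext s) k ≤ (n : ℤ) - 1 := by
  by_contra hcon
  push_neg at hcon
  have hup := hgt_upper hs (i : ℤ) k hk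
  have hdn := hgt_lower_seg hs (i : ℤ) k hk
  rw [hend] at hdn
  have hcK : ((q * k : ℕ) : ℤ) = (q : ℤ) * (k : ℤ) := by push_cast; ring
  have hcP : ((p * (ℓ - k) : ℕ) : ℤ) = (p : ℤ) * ((ℓ - k : ℕ) : ℤ) := by push_cast; ring
  have h1 : n - i ≤ q * k := by omega
  have h2 : n - j ≤ p * (ℓ - k) := by omega
  have hA : (n - 1 - i) / q * q ≤ n - 1 - i := Nat.div_mul_le_self _ _
  have hB : (n - 1 - j) / p * p ≤ n - 1 - j := Nat.div_mul_le_self _ _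
  have hk1 : (n - 1 - i) / q + 1 ≤ k := by
    by_contra h
    push_neg at h
    have h4 : q * k ≤ q * ((n - 1 - i) / q) := Nat.mul_le_mul le_rfl (by omega)
    have h5 : q * ((n - 1 - i) / q) = (n - 1 - i) / q * q := Nat.mul_comm _ _
    omega
  have hk2 : (n - 1 - j) / p + 1 ≤ ℓ - k := by
    by_contra h
    push_neg at h
    have h4 : p * (ℓ - k) ≤ p * ((n - 1 - j) / p) := Nat.mul_le_mul le_rfl (by omega)
    have h5 : p * ((n - 1 - j) / p) = (n - 1 - j) / p * p := Nat.mul_comm _ _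
    omega
  omega

end Combin

/-- **Theorem 7.2** (approximation): with `L = ⌊(n-1-i)/q⌋ + ⌊(n-1-j)/p⌋ + 1`, for all
`ℓ ≤ L` one has `D_{[ℓ,i,j,n]} = D_{[ℓ,i,j]}` and `A_{[ℓ,i,j,n]} = A_{[ℓ,i,j]}`; consequently
`A_{i,j}(z) - R_{i,j,n}(z) = O(z^{-L-2})`, i.e. the coefficients of `z^{-ℓ-1}` in `A_{i,j}(z)`
and `R_{i,j,n}(z)` agree for all `0 ≤ ℓ ≤ L`. -/
theorem truncated_resolvent_approximation
    (p q : ℕ) (hp : 1 ≤ p) (hq : 1 ≤ q) (a : ℤ → ℤ → ℂ) (n : ℕ) (hn : 1 ≤ n)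
    (i j : ℕ) (hi : i < n) (hj : j < n) :
    (∀ ℓ : ℕ, ℓ ≤ (n - 1 - i) / q + (n - 1 - j) / p + 1 →
      DboxSet p q n ℓ (i : ℤ) (j : ℤ) = Dset p q ℓ (i : ℤ) (j : ℤ)) ∧
    (∀ ℓ : ℕ, ℓ ≤ (n - 1 - i) / q + (n - 1 - j) / p + 1 →
      Aboxpoly p q a n ℓ (i : ℤ) (j : ℤ) = Apoly p q a ℓ (i : ℤ) (j : ℤ)) ∧
    (∀ ℓ : ℕ, ℓ ≤ (n - 1 - i) / q + (n - 1 - j) / p + 1 →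
      (Aser p q a (i : ℤ) (j : ℤ) -
          gen fun t => (Hnmat p q a n ^ t) ⟨i, hi⟩ ⟨j, hj⟩).coeff ((ℓ : ℤ) + 1) = 0) := by
  have key : ∀ ℓ : ℕ, ℓ ≤ (n - 1 - i) / q + (n - 1 - j) / p + 1 →
      ∀ s ∈ steps p q ℓ,
        ((hgt (i : ℤ) (ext s) ℓ = (j : ℤ) ∧
            ∀ k ≤ ℓ, 0 ≤ hgt (i : ℤ) (ext s) k ∧ hgt (i : ℤ) (ext s) k ≤ (n : ℤ) - 1) ↔
          (hgt (i : ℤ) (ext s) ℓ = (j : ℤ) ∧ ∀ k ≤ ℓ, 0 ≤ hgt (i : ℤ) (ext s) k)) := by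
    intro ℓ hℓ s hs
    constructor
    · rintro ⟨h1, h2⟩
      exact ⟨h1, fun k hk => (h2 k hk).1⟩
    · rintro ⟨h1, h2⟩
      exact ⟨h1, fun k hk => ⟨h2 k hk, box_auto hq hp hi hj hℓ hs h1 hk⟩⟩
  have part2 : ∀ ℓ : ℕ, ℓ ≤ (n - 1 - i) / q + (n - 1 - j) / p + 1 →
      Aboxpoly p q a n ℓ (i : ℤ) (j : ℤ) = Apoly p q a ℓ (i : ℤ) (j : ℤ) := by
    intro ℓ hℓ
    unfold Aboxpoly Apoly
    exact Finset.sum_congr rfl fun s hs => if_congr (key ℓ hℓ s hs) rfl rfl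
  refine ⟨?_, part2, ?_⟩
  · intro ℓ hℓ
    unfold DboxSet Dset
    exact Finset.filter_congr fun s hs => key ℓ hℓ s hs
  · intro ℓ hℓ
    rw [HahnSeries.coeff_sub, Aser, gen_coeff, gen_coeff, pow_entry]
    have : ((⟨i, hi⟩ : Fin n) : ℤ) = (i : ℤ) := rfl
    rw [show (((⟨i, hi⟩ : Fin n) : ℕ) : ℤ) = (i : ℤ) from rfl,
      show (((⟨j, hj⟩ : Fin n) : ℕ) : ℤ) = (j : ℤ) from rfl]
    rw [← part2 ℓ hℓ]
    ring
end
end
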